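/- Let K be a field and (E,w) a row-finite weighted graph satisfying Condition (LPA). Then there exists a row-finite weighted graph (Ẽ,w̃) such that: the range of every weighted edge of (Ẽ,w̃) is a sink (emits no edges), no vertex of Ẽ emits two distinct weighted edges, no vertex of Ẽ receives two distinct weighted edges, and L_K(Ẽ,w̃) is isomorphic as a K-algebra to L_K(E,w). -/

import Mathlib

open FreeAlgebra
open scoped Classical

/-- A row-finite weighted graph: a directed graph with source `s`, range `r` and
a weight map `w : E¹ → {1,2,3,…}`, such that every vertex emits finitely many edges. -/
structure WGraph : Type 1 where
  V : Type
  E : Type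
  s : E → V
  r : E → V
  w : E → ℕ
  w_pos : ∀ e, 0 < w e
  rowFinite : ∀ v, {e | s e = v}.Finite

namespace WGraph

variable (G : WGraph)

/-- The weight of a vertex: `w(v) = max {w(e) : e ∈ s⁻¹(v)}` (with `max ∅ = 0`). -/
noncomputable def vw (v : G.V) : ℕ := (G.rowFinite v).toFinset.sup G.w

/-- One-step reachability: there is an edge from `u` to `v`. -/
def Adj (u v : G.V) : Prop := ∃ e, G.s e = u ∧ G.r e = v

/-- `u ≥ v`: there is a (possibly empty) path from `u` to `v`. -/
def Geq (u v : G.V) : Prop := Relation.ReflTransGen G.Adj u v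

/-- An edge is weighted if its weight is `> 1`. -/
def Weighted (e : G.E) : Prop := 1 < G.w e

/-- Two edges are in line. -/
def InLine (e f : G.E) : Prop := e = f ∨ G.Geq (G.r e) (G.s f) ∨ G.Geq (G.r f) (G.s e)

/-- `c` is a cycle based at `v`. -/
def IsCycleAt (c : List G.E) (v : G.V) : Prop :=
  ∃ h : c ≠ [], c.Chain' (fun a b => G.r a = G.s b) ∧ G.s (c.head h) = v ∧
    G.r (c.getLast h) = v ∧ (c.map G.s).Nodup

/-- Condition (LPA). -/
def LPA : Prop :=
  (∀ e f, G.Weighted e → G.Weighted f → G.s e = G.s f → e = f) ∧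
  (∀ v, (∃ g, G.Weighted g ∧ G.Geq (G.r g) v) → ∀ e f, G.s e = v → G.s f = v → e = f) ∧
  (∀ e f, G.Weighted e → G.Weighted f → ¬ G.InLine e f →
    ∀ v, ¬ (G.Geq (G.r e) v ∧ G.Geq (G.r f) v)) ∧
  (∀ e, G.Weighted e → ∀ v, G.Geq (G.r e) v → ∀ c, G.IsCycleAt c v → e ∈ c)

end WGraph

/-- The generators `v`, `e_i`, `e_i*` (for `1 ≤ i ≤ w(e)`) of the weighted
Leavitt path algebra. -/
inductive WGen (G : WGraph) : Type
  | vtx (v : G.V)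
  | edge (e : G.E) (i : ℕ) (h1 : 1 ≤ i) (h2 : i ≤ G.w e)
  | ghost (e : G.E) (i : ℕ) (h1 : 1 ≤ i) (h2 : i ≤ G.w e)

variable (G : WGraph) (K : Type) [Field K]

/-- The generator `v` in the free algebra. -/
def fvtx (v : G.V) : FreeAlgebra K (WGen G) := ι K (WGen.vtx v)

/-- The generator `e_i` in the free algebra, read as `0` when `i > w(e)`. -/
noncomputable def fedge (e : G.E) (i : ℕ) : FreeAlgebra K (WGen G) :=
  if h : 1 ≤ i ∧ i ≤ G.w e then ι K (WGen.edge e i h.1 h.2) else 0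

/-- The generator `e_i*` in the free algebra, read as `0` when `i > w(e)`. -/
noncomputable def fghost (e : G.E) (i : ℕ) : FreeAlgebra K (WGen G) :=
  if h : 1 ≤ i ∧ i ≤ G.w e then ι K (WGen.ghost e i h.1 h.2) else 0

/-- The defining relations of the weighted Leavitt path algebra. -/
inductive WRel : FreeAlgebra K (WGen G) → FreeAlgebra K (WGen G) → Prop
  | vtxMul (u v : G.V) :
      WRel (fvtx G K u * fvtx G K v) (if u = v then fvtx G K u else 0)
  | srcEdge (e : G.E) (i : ℕ) :
      WRel (fvtx G K (G.s e) * fedge G K e i) (fedge G K e i)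
  | edgeRng (e : G.E) (i : ℕ) :
      WRel (fedge G K e i * fvtx G K (G.r e)) (fedge G K e i)
  | rngGhost (e : G.E) (i : ℕ) :
      WRel (fvtx G K (G.r e) * fghost G K e i) (fghost G K e i)
  | ghostSrc (e : G.E) (i : ℕ) :
      WRel (fghost G K e i * fvtx G K (G.s e)) (fghost G K e i)
  | ck1 (v : G.V) (e f : G.E) (he : G.s e = v) (hf : G.s f = v) :
      WRel (∑ i ∈ Finset.Icc 1 (G.vw v), fghost G K e i * fedge G K f i)
           (if e = f then fvtx G K (G.r e) else 0)
  | ck2 (v : G.V) (i j : ℕ) (hi1 : 1 ≤ i) (hi2 : i ≤ G.vw v) (hj1 : 1 ≤ j) (hj2 : j ≤ G.vw v) :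
      WRel (∑ e ∈ (G.rowFinite v).toFinset, fedge G K e i * fghost G K e j)
           (if i = j then fvtx G K v else 0)

/-- The weighted Leavitt path algebra `L_K(E,w)`, presented by generators and relations. -/
abbrev WLPA : Type := RingQuot (WRel G K)

/-- The canonical quotient map from the free algebra to `L_K(E,w)`. -/
noncomputable def wmk : FreeAlgebra K (WGen G) →ₐ[K] WLPA G K :=
  RingQuot.mkAlgHom K (WRel G K)

/-- The image of a generator in `L_K(E,w)`. -/
noncomputable def gen (x : WGen G) : WLPA G K := wmk G K (ι K x)

/-- The image in `L_K(E,w)` of a word over the generating set. -/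
noncomputable def wordElem (xs : List (WGen G)) : WLPA G K := (xs.map (gen G K)).prod

/-- Source of a letter (with the usual conventions). -/
def gsrc : WGen G → G.V
  | .vtx v => v
  | .edge e _ _ _ => G.s e
  | .ghost e _ _ _ => G.r e

/-- Range of a letter (with the usual conventions). -/
def grng : WGen G → G.V
  | .vtx v => v
  | .edge e _ _ _ => G.r e
  | .ghost e _ _ _ => G.s e

/-- Whether a letter is a vertex letter. -/
def IsVertexLetter : WGen G → Prop
  | .vtx _ => True
  | _ => False

/-- A d-path: a nonempty word which is either a single vertex letter, or consists of
non-vertex letters with matching ranges and sources. -/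
def IsDPath (xs : List (WGen G)) : Prop :=
  (∃ v, xs = [WGen.vtx v]) ∨
  (xs ≠ [] ∧ (∀ x ∈ xs, ¬ IsVertexLetter G x) ∧ xs.Chain' (fun a b => grng G a = gsrc G b))

/-- `sp` is a choice of special edges: for every non-sink `v`, `sp v ∈ s⁻¹(v)`
and `w(sp v) = w(v)`. -/
def IsSpecialChoice (sp : G.V → G.E) : Prop :=
  ∀ v : G.V, (∃ e, G.s e = v) → G.s (sp v) = v ∧ G.w (sp v) = G.vw v

/-- The forbidden two-letter words: `(e^v)_i ((e^v)_j)*` for a special edge `e^v`, and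
`e_1* f_1` for arbitrary edges `e, f`. -/
def Forbidden (sp : G.V → G.E) : WGen G → WGen G → Prop
  | WGen.edge e _ _ _, WGen.ghost f _ _ _ => e = f ∧ sp (G.s e) = e
  | WGen.ghost _ i _ _, WGen.edge _ j _ _ => i = 1 ∧ j = 1
  | _, _ => False

/-- A nod-path: a d-path none of whose subwords is forbidden. -/
def IsNod (sp : G.V → G.E) (xs : List (WGen G)) : Prop :=
  IsDPath G xs ∧ xs.Chain' (fun a b => ¬ Forbidden G sp a b)

/-- The degree of a letter in `⊕_{i∈ℕ} ℤ`. -/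
noncomputable def gdeg : WGen G → (ℕ →₀ ℤ)
  | .vtx _ => 0
  | .edge _ i _ _ => Finsupp.single i 1
  | .ghost _ i _ _ => - Finsupp.single i 1

/-- The homogeneous component of degree `d` of `L_K(E,w)` with respect to the
canonical grading: the span of the images of all words of degree `d`. -/
noncomputable def homComp (d : ℕ →₀ ℤ) : Submodule K (WLPA G K) :=
  Submodule.span K {x | ∃ xs : List (WGen G), (xs.map (gdeg G)).sum = d ∧ x = wordElem G K xs}

/-- `V^(m)`: the span of all products of at most `m` elements of `V`. -/
def pileSpan (K A : Type) [Field K] [Ring A] [Algebra K A] (V : Set A) (m : ℕ) :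
    Submodule K A :=
  Submodule.span K {x | ∃ l : List A, l ≠ [] ∧ l.length ≤ m ∧ (∀ a ∈ l, a ∈ V) ∧ x = l.prod}

namespace WGraph

variable {G : WGraph}

/-- The set `T(r(E¹_w))` of vertices reachable from the range of some weighted edge. -/
def SS (G : WGraph) : Set G.V := {v | ∃ e, G.Weighted e ∧ G.Geq (G.r e) v}

lemma SS_adj {u v : G.V} (hu : u ∈ G.SS) (huv : G.Adj u v) : v ∈ G.SS := by
  obtain ⟨e, he, hge⟩ := hu
  exact ⟨e, he, hge.tail huv⟩

lemma SS_geq {u v : G.V} (hu : u ∈ G.SS) (huv : G.Geq u v) : v ∈ G.SS := by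
  induction huv with
  | refl => exact hu
  | tail _ hadj ih => exact SS_adj ih hadj

lemma r_mem_SS {e : G.E} (he : G.Weighted e) : G.r e ∈ G.SS :=
  ⟨e, he, Relation.ReflTransGen.refl⟩

lemma det (h : G.LPA) {v : G.V} (hv : v ∈ G.SS) {e f : G.E}
    (he : G.s e = v) (hf : G.s f = v) : e = f :=
  h.2.1 v hv e f he hf

/-- Walks in the graph. -/
inductive Walk (G : WGraph) : G.V → G.V → List G.E → Prop
  | nil (a : G.V) : Walk G a a []
  | cons {a c : G.V} {e : G.E} {l : List G.E} (he : G.s e = a)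
      (hw : Walk G (G.r e) c l) : Walk G a c (e :: l)

lemma Walk.eq_of_nil {a b : G.V} (hw : G.Walk a b []) : a = b := by cases hw; rfl

lemma walk_of_geq {a b : G.V} (hg : G.Geq a b) : ∃ l, G.Walk a b l := by
  induction hg using Relation.ReflTransGen.head_induction_on with
  | refl => exact ⟨[], Walk.nil b⟩
  | head hadj _ ih =>
      obtain ⟨l, hl⟩ := ih
      obtain ⟨e, he, hr⟩ := hadj
      exact ⟨e :: l, Walk.cons he (hr ▸ hl)⟩

lemma geq_of_walk {a b : G.V} {l : List G.E} (hw : G.Walk a b l) : G.Geq a b := by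
  induction hw with
  | nil => exact Relation.ReflTransGen.refl
  | cons he _ ih => exact Relation.ReflTransGen.head ⟨_, he, rfl⟩ ih

lemma walk_geq_src {a b : G.V} {l : List G.E} (hw : G.Walk a b l) {e : G.E}
    (hel : e ∈ l) : G.Geq a (G.s e) := by
  induction hw with
  | nil => cases hel
  | @cons a2 c e2 l2 he hw ih =>
      rcases List.mem_cons.mp hel with h | h
      · subst h
        rw [he]
        exact Relation.ReflTransGen.refl
      · exact Relation.ReflTransGen.head ⟨e2, he, rfl⟩ (ih h)

lemma walk_src_SS {a b : G.V} {l : List G.E} (hw : G.Walk a b l) (ha : a ∈ G.SS)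
    {e : G.E} (hel : e ∈ l) : G.s e ∈ G.SS :=
  SS_geq ha (walk_geq_src hw hel)

lemma walk_split {a b : G.V} {l : List G.E} (hw : G.Walk a b l) {e : G.E}
    (hel : e ∈ l) : ∃ l₂, (e :: l₂).Sublist l ∧ G.Walk (G.s e) b (e :: l₂) := by
  induction hw with
  | nil => cases hel
  | @cons a2 c e2 l2 he hw ih =>
      rcases List.mem_cons.mp hel with h | h
      · subst h
        exact ⟨l2, List.Sublist.refl _, Walk.cons rfl hw⟩
      · obtain ⟨l₂, hsub, hw₂⟩ := ih h
        exact ⟨l₂, hsub.cons _, hw₂⟩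

/-- Every walk can be reduced to one with pairwise distinct sources avoiding
the endpoint. -/
lemma exists_reduced_walk {a b : G.V} {l : List G.E} (hw : G.Walk a b l) :
    ∃ l', G.Walk a b l' ∧ (l'.map G.s).Nodup ∧ b ∉ l'.map G.s := by
  induction hw with
  | nil => exact ⟨[], Walk.nil _, List.nodup_nil, by simp⟩
  | @cons a c e l he hw ih =>
      obtain ⟨t, hwt, hnd, hbt⟩ := ih
      by_cases hab : a = c
      · exact ⟨[], hab ▸ Walk.nil a, List.nodup_nil, by simp⟩
      by_cases hmem : a ∈ t.map G.s
      · obtain ⟨e₂, he₂t, he₂⟩ := List.mem_map.mp hmem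
        obtain ⟨l₂, hsub, hw₂⟩ := walk_split hwt he₂t
        refine ⟨e₂ :: l₂, he₂ ▸ hw₂, ?_, ?_⟩
        · exact hnd.sublist (hsub.map G.s)
        · exact fun hc => hbt ((hsub.map G.s).mem hc)
      · refine ⟨e :: t, Walk.cons he hwt, ?_, ?_⟩
        · rw [List.map_cons, he, List.nodup_cons]
          exact ⟨hmem, hnd⟩
        · simp only [List.map_cons, List.mem_cons, he]
          rintro (hc | hc)
          · exact hab hc.symm
          · exact hbt hc

lemma walk_unique (h : G.LPA) : ∀ {l₁ l₂ : List G.E} {a b : G.V},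
    G.Walk a b l₁ → G.Walk a b l₂ → (∀ e ∈ l₁, G.s e ∈ G.SS) →
    (∀ e ∈ l₂, G.s e ∈ G.SS) → b ∉ l₁.map G.s → b ∉ l₂.map G.s → l₁ = l₂ := by
  intro l₁
  induction l₁ with
  | nil =>
      intro l₂ a b hw₁ hw₂ _ _ _ hb₂
      cases hw₁
      cases hw₂ with
      | nil => rfl
      | @cons _ _ e2 l2 he hw => exact absurd (by simp [he]) hb₂
  | cons e t ih =>
      intro l₂ a b hw₁ hw₂ hs₁ hs₂ hb₁ hb₂
      cases hw₁ with
      | cons he₁ hw₁' =>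
      cases hw₂ with
      | nil => exact absurd (by simp [he₁]) hb₁
      | @cons _ _ e₂ t₂ he₂ hw₂' =>
          have ha : a ∈ G.SS := he₁ ▸ hs₁ e (by simp)
          have hee : e₂ = e := det h ha he₂ he₁
          subst hee
          have := ih hw₁' hw₂' (fun x hx => hs₁ x (by simp [hx]))
            (fun x hx => hs₂ x (by simp [hx]))
            (fun hc => hb₁ (by simp [hc])) (fun hc => hb₂ (by simp [hc]))
          rw [this]

lemma walk_chain' {a b : G.V} {l : List G.E} (hw : G.Walk a b l) :
    l.Chain' (fun x y => G.r x = G.s y) := by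
  induction hw with
  | nil => exact List.isChain_nil
  | @cons a c e l he hw ih =>
      refine List.isChain_cons.mpr ⟨?_, ih⟩
      intro y hy
      cases hw with
      | nil => simp at hy
      | @cons _ _ e₂ l₂ he₂ _ =>
          simp only [List.head?_cons, Option.mem_def, Option.some.injEq] at hy
          rw [← hy]
          exact he₂.symm

lemma walk_head {a b : G.V} {e : G.E} {l : List G.E} (hw : G.Walk a b (e :: l)) :
    G.s e = a := by cases hw; assumption

lemma walk_getLast {a b : G.V} {l : List G.E} (hw : G.Walk a b l) (hl : l ≠ []) :
    G.r (l.getLast hl) = b := by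
  induction hw with
  | nil => exact absurd rfl hl
  | @cons a c e l he hw ih =>
      cases l with
      | nil => simpa using hw.eq_of_nil
      | cons e₂ t₂ =>
          rw [List.getLast_cons (by simp)]
          exact ih (by simp)

/-- A walk from `a` to `a` whose sources are distinct is a cycle. -/
lemma isCycleAt_of_walk {a : G.V} {l : List G.E} (hw : G.Walk a a l) (hl : l ≠ [])
    (hnd : (l.map G.s).Nodup) : G.IsCycleAt l a := by
  refine ⟨hl, walk_chain' hw, ?_, walk_getLast hw hl, hnd⟩
  cases l with
  | nil => exact absurd rfl hl
  | cons e t => exact walk_head hw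

lemma walk_of_parts : ∀ {l : List G.E} {a b : G.V} (hl : l ≠ []),
    l.Chain' (fun x y => G.r x = G.s y) → G.s (l.head hl) = a →
    G.r (l.getLast hl) = b → G.Walk a b l := by
  intro l
  induction l with
  | nil => intro a b hl; exact absurd rfl hl
  | cons e t ih =>
      intro a b hl hch hhd hlast
      cases t with
      | nil =>
          simp only [List.head_cons] at hhd
          simp only [List.getLast_singleton] at hlast
          exact Walk.cons hhd (hlast ▸ Walk.nil _)
      | cons e₂ t₂ =>
          have hch' := (List.isChain_cons_cons.mp hch)
          refine Walk.cons (by simpa using hhd) ?_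
          refine ih (by simp) hch'.2 (by simpa using hch'.1.symm) ?_
          rw [← hlast]
          exact congrArg G.r (List.getLast_cons (by simp)).symm

lemma walk_of_cycle {a : G.V} {c : List G.E} (hc : G.IsCycleAt c a) : G.Walk a a c := by
  obtain ⟨hne, hch, hhd, hlast, -⟩ := hc
  exact walk_of_parts hne hch hhd hlast

end WGraph
namespace WGraph

variable {G : WGraph}

lemma Walk.append {a b c : G.V} {l₁ l₂ : List G.E} (h₁ : G.Walk a b l₁)
    (h₂ : G.Walk b c l₂) : G.Walk a c (l₁ ++ l₂) := by
  induction h₁ with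
  | nil => exact h₂
  | cons he _ ih => exact Walk.cons he (ih h₂)

lemma geq_total (h : G.LPA) : ∀ {u x y : G.V}, u ∈ G.SS → G.Geq u x → G.Geq u y →
    G.Geq x y ∨ G.Geq y x := by
  intro u x y hu hx
  revert hu
  induction hx using Relation.ReflTransGen.head_induction_on with
  | refl => intro _ hy; exact Or.inl hy
  | head hadj hgeq ih =>
      intro ha hy
      rcases hy.cases_head with hc | ⟨m, hadj', hy'⟩
      · exact Or.inr (hc ▸ Relation.ReflTransGen.head hadj hgeq)
      · obtain ⟨e, he, hre⟩ := hadj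
        obtain ⟨e', he', hre'⟩ := hadj'
        have hee : e = e' := det h ha he he'
        subst hee
        have hcm : _ = m := hre ▸ hre'
        exact ih (SS_adj ha ⟨e, he, hre⟩) (hcm ▸ hy')

/-- Given `a ≥ s g` and `r g = a`, there is a cycle at `a` ending with `g`. -/
lemma cycle_exists {a : G.V} {g : G.E} (hg : G.Geq a (G.s g)) (hr : G.r g = a) :
    ∃ l, G.Walk a (G.s g) l ∧ (l.map G.s).Nodup ∧ G.s g ∉ l.map G.s ∧
      G.IsCycleAt (l ++ [g]) a := by
  obtain ⟨l0, hw0⟩ := walk_of_geq hg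
  obtain ⟨l, hw, hnd, hend⟩ := exists_reduced_walk hw0
  have hwg : G.Walk (G.s g) a [g] := Walk.cons rfl (hr ▸ Walk.nil _)
  have hwc : G.Walk a a (l ++ [g]) := hw.append hwg
  have hnd' : ((l ++ [g]).map G.s).Nodup := by
    rw [List.map_append, List.nodup_append]
    refine ⟨hnd, by simp, ?_⟩
    intro x hx
    simp only [List.map_cons, List.map_nil, List.mem_singleton]
    rintro _ rfl rfl
    exact hend hx
  exact ⟨l, hw, hnd, hend, isCycleAt_of_walk hwc (by simp) hnd'⟩

/-- If `e` is weighted with `s e ∉ SS`, no edge with source in `SS` has range `r e`. -/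
lemma no_SS_into (h : G.LPA) {e g : G.E} (we : G.Weighted e) (hse : G.s e ∉ G.SS)
    (hsg : G.s g ∈ G.SS) : G.r g ≠ G.r e := by
  intro hr
  obtain ⟨e1, w1, h1⟩ := hsg
  have hsg : G.s g ∈ G.SS := ⟨e1, w1, h1⟩
  have hag : G.Geq (G.r e) (G.s g) := by
    by_cases hee : e = e1
    · exact hee ▸ h1
    · have hil : G.InLine e e1 := by
        by_contra hnil
        exact h.2.2.1 e e1 we w1 hnil (G.r e)
          ⟨Relation.ReflTransGen.refl, hr ▸ (h1.tail ⟨g, rfl, rfl⟩)⟩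
      rcases hil with h' | h' | h'
      · exact absurd h' hee
      · exact h'.trans (Relation.ReflTransGen.head ⟨e1, rfl, rfl⟩ h1)
      · exact absurd ⟨e1, w1, h'⟩ hse
  obtain ⟨l, hwl, _, _, hcyc⟩ := cycle_exists hag hr
  have hmem := h.2.2.2 e we (G.r e) Relation.ReflTransGen.refl _ hcyc
  rcases List.mem_append.mp hmem with hm | hm
  · exact hse (walk_src_SS hwl (r_mem_SS we) hm)
  · simp only [List.mem_singleton] at hm
    exact hse (hm ▸ hsg)

lemma det_cycle_eq (h : G.LPA) {a : G.V} {l₁ l₂ : List G.E}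
    (hw₁ : G.Walk a a l₁) (hw₂ : G.Walk a a l₂) (h₁ : l₁ ≠ []) (h₂ : l₂ ≠ [])
    (hnd₁ : (l₁.map G.s).Nodup) (hnd₂ : (l₂.map G.s).Nodup)
    (hS₁ : ∀ e ∈ l₁, G.s e ∈ G.SS) (hS₂ : ∀ e ∈ l₂, G.s e ∈ G.SS) : l₁ = l₂ := by
  cases l₁ with
  | nil => exact absurd rfl h₁
  | cons e t =>
  cases l₂ with
  | nil => exact absurd rfl h₂
  | cons e' t' =>
      have he : G.s e = a := walk_head hw₁
      have he' : G.s e' = a := walk_head hw₂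
      have ha : a ∈ G.SS := he ▸ hS₁ e (by simp)
      have hee : e = e' := det h ha he he'
      subst hee
      have hna : a ∉ t.map G.s := by
        rw [List.map_cons, List.nodup_cons, he] at hnd₁
        exact hnd₁.1
      have hna' : a ∉ t'.map G.s := by
        rw [List.map_cons, List.nodup_cons, he] at hnd₂
        exact hnd₂.1
      have hwt : G.Walk (G.r e) a t := by cases hw₁; assumption
      have hwt' : G.Walk (G.r e) a t' := by cases hw₂; assumption
      rw [walk_unique h hwt hwt' (fun x hx => hS₁ x (by simp [hx]))
        (fun x hx => hS₂ x (by simp [hx])) hna hna']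

lemma into_unique_aux (h : G.LPA) {g g' : G.E} {e0 : G.E} (w0 : G.Weighted e0)
    (hg1 : G.Geq (G.r e0) (G.s g)) (hg2 : G.Geq (G.r e0) (G.s g'))
    (hr : G.r g = G.r g') (hss : G.s g ≠ G.s g') (hgg' : G.Geq (G.s g) (G.s g')) :
    g = g' := by
  have hsgS : G.s g ∈ G.SS := ⟨e0, w0, hg1⟩
  have hrgS : G.r g ∈ G.SS := SS_adj hsgS ⟨g, rfl, rfl⟩
  have ha' : G.Geq (G.r g) (G.s g') := by
    rcases hgg'.cases_head with hc | ⟨m, ⟨e', he', hre'⟩, hm⟩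
    · exact absurd hc hss
    · have he'g : e' = g := det h hsgS he' rfl
      subst he'g
      exact hre' ▸ hm
  have key : G.Geq (G.r g) (G.s g) → g = g' := by
    intro hback
    obtain ⟨l, hwl, hnd, hend, hcyc⟩ := cycle_exists hback rfl
    obtain ⟨l', hwl', hnd', hend', hcyc'⟩ := cycle_exists ha' hr.symm
    have hS₁ : ∀ x ∈ l ++ [g], G.s x ∈ G.SS :=
      fun x hx => walk_src_SS (walk_of_cycle hcyc) hrgS hx
    have hS₂ : ∀ x ∈ l' ++ [g'], G.s x ∈ G.SS :=
      fun x hx => walk_src_SS (walk_of_cycle hcyc') hrgS hx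
    obtain ⟨-, -, -, -, hndc⟩ := hcyc
    obtain ⟨-, -, -, -, hndc'⟩ := hcyc'
    have hwc : G.Walk (G.r g) (G.r g) (l ++ [g]) :=
      hwl.append (Walk.cons rfl (Walk.nil _))
    have hwc' : G.Walk (G.r g) (G.r g) (l' ++ [g']) :=
      hwl'.append (Walk.cons rfl (hr ▸ Walk.nil _))
    have hcc : l ++ [g] = l' ++ [g'] :=
      det_cycle_eq h hwc hwc' (by simp) (by simp) hndc hndc' hS₁ hS₂
    have hlast : some g = some g' := by
      rw [← List.getLast?_concat (l := l), ← List.getLast?_concat (l := l'), hcc]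
    exact Option.some.inj hlast
  have hu' : G.Geq (G.r e0) (G.r g) := hg1.tail ⟨g, rfl, rfl⟩
  rcases geq_total h (r_mem_SS w0) hu' hg1 with hcase | hcase
  · exact key hcase
  · obtain ⟨l', hwl', hnd', hend', hcyc'⟩ := cycle_exists ha' hr.symm
    have he0 : e0 ∈ l' ++ [g'] := h.2.2.2 e0 w0 (G.r g) hu' _ hcyc'
    have hge : G.Geq (G.r g) (G.s e0) := walk_geq_src (walk_of_cycle hcyc') he0
    exact key ((hge.tail ⟨e0, rfl, rfl⟩).trans hg1)

/-- Two distinct edges with sources in `SS` cannot have the same range. -/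
lemma into_unique (h : G.LPA) {g g' : G.E} (hsg : G.s g ∈ G.SS)
    (hsg' : G.s g' ∈ G.SS) (hr : G.r g = G.r g') : g = g' := by
  obtain ⟨e1, w1, h1⟩ := hsg
  obtain ⟨e2, w2, h2⟩ := hsg'
  have hcom : ∃ e0, G.Weighted e0 ∧ G.Geq (G.r e0) (G.s g) ∧ G.Geq (G.r e0) (G.s g') := by
    by_cases hee : e1 = e2
    · exact ⟨e1, w1, h1, hee ▸ h2⟩
    · have hil : G.InLine e1 e2 := by
        by_contra hnil
        exact h.2.2.1 e1 e2 w1 w2 hnil (G.r g)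
          ⟨h1.tail ⟨g, rfl, rfl⟩, hr.symm ▸ (h2.tail ⟨g', rfl, rfl⟩)⟩
      rcases hil with h' | h' | h'
      · exact absurd h' hee
      · exact ⟨e1, w1, h1, h'.trans (Relation.ReflTransGen.head ⟨e2, rfl, rfl⟩ h2)⟩
      · exact ⟨e2, w2, h'.trans (Relation.ReflTransGen.head ⟨e1, rfl, rfl⟩ h1), h2⟩
  obtain ⟨e0, w0, hg1, hg2⟩ := hcom
  by_cases hss : G.s g = G.s g'
  · exact det h (⟨e0, w0, hg1⟩ : G.s g ∈ G.SS) rfl hss.symm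
  rcases geq_total h (r_mem_SS w0) hg1 hg2 with ht | ht
  · exact into_unique_aux h w0 hg1 hg2 hr hss ht
  · exact (into_unique_aux h w0 hg2 hg1 hr.symm (Ne.symm hss) ht).symm

lemma toFinset_single (h : G.LPA) {v : G.V} (hv : v ∈ G.SS) {e : G.E}
    (he : G.s e = v) : (G.rowFinite v).toFinset = {e} := by
  ext f
  simp only [Set.Finite.mem_toFinset, Set.mem_setOf_eq, Finset.mem_singleton]
  exact ⟨fun hf => det h hv hf he, fun hf => hf ▸ he⟩

lemma vw_single (h : G.LPA) {v : G.V} (hv : v ∈ G.SS) {e : G.E}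
    (he : G.s e = v) : G.vw v = G.w e := by
  rw [vw, toFinset_single h hv he, Finset.sup_singleton]

lemma exists_edge_of_vw_pos {v : G.V} (hv : 1 ≤ G.vw v) : ∃ e, G.s e = v := by
  by_contra hc
  push_neg at hc
  have : (G.rowFinite v).toFinset = ∅ := by
    ext f
    simp only [Set.Finite.mem_toFinset, Set.mem_setOf_eq, Finset.notMem_empty,
      iff_false]
    exact hc f
  rw [vw, this, Finset.sup_empty] at hv
  exact absurd hv (by simp)

end WGraph
namespace WGraph

lemma mem_rowFinite_toFinset (G : WGraph) {v : G.V} {e : G.E} :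
    e ∈ (G.rowFinite v).toFinset ↔ G.s e = v := Set.Finite.mem_toFinset _

/-- The edge type of the reversed graph: edges with source in `SS` are reversed and
split into `w e` parallel unweighted edges; other edges are kept. -/
abbrev REdge (G : WGraph) : Type :=
  {p : G.E × ℕ // (G.s p.1 ∈ G.SS ∧ 1 ≤ p.2 ∧ p.2 ≤ G.w p.1) ∨
      (G.s p.1 ∉ G.SS ∧ p.2 = 0)}

variable {G : WGraph}

/-- The reversed graph. -/
@[reducible] noncomputable def rev (G : WGraph) (h : G.LPA) : WGraph where
  V := G.V
  E := REdge G
  s p := if G.s p.1.1 ∈ G.SS then G.r p.1.1 else G.s p.1.1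
  r p := if G.s p.1.1 ∈ G.SS then G.s p.1.1 else G.r p.1.1
  w p := if G.s p.1.1 ∈ G.SS then 1 else G.w p.1.1
  w_pos p := by
    split
    · exact one_pos
    · exact G.w_pos _
  rowFinite v := by
    by_cases hex : ∃ g : G.E, G.s g ∈ G.SS ∧ G.r g = v
    · obtain ⟨g0, hg0, hrg0⟩ := hex
      have hU : (({e : G.E | G.s e = v} ×ˢ ({0} : Set ℕ)) ∪
          (({g0} : Set G.E) ×ˢ Set.Iic (G.w g0))).Finite :=
        ((G.rowFinite v).prod (Set.finite_singleton _)).union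
          ((Set.finite_singleton _).prod (Set.finite_Iic _))
      refine Set.Finite.subset (hU.preimage (Subtype.val_injective.injOn)) ?_
      rintro ⟨⟨g, m⟩, hval⟩ hs'
      have hs2 : (if G.s g ∈ G.SS then G.r g else G.s g) = v := hs'
      clear hs'
      rcases hval with ⟨hsS, h1, h2⟩ | ⟨hns, hm0⟩
      · rw [if_pos hsS] at hs2
        have : g = g0 := into_unique h hsS hg0 (hs2.trans hrg0.symm)
        subst this
        exact Or.inr ⟨rfl, h2⟩
      · rw [if_neg hns] at hs2
        exact Or.inl ⟨hs2, hm0⟩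
    · have hU : (({e : G.E | G.s e = v} ×ˢ ({0} : Set ℕ))).Finite :=
        (G.rowFinite v).prod (Set.finite_singleton _)
      refine Set.Finite.subset (hU.preimage (Subtype.val_injective.injOn)) ?_
      rintro ⟨⟨g, m⟩, hval⟩ hs'
      have hs2 : (if G.s g ∈ G.SS then G.r g else G.s g) = v := hs'
      clear hs'
      rcases hval with ⟨hsS, h1, h2⟩ | ⟨hns, hm0⟩
      · rw [if_pos hsS] at hs2
        exact absurd ⟨g, hsS, hs2⟩ hex
      · rw [if_neg hns] at hs2
        exact ⟨hs2, hm0⟩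

variable (h : G.LPA)

@[simp] lemma rev_s (p : G.REdge) :
    (rev G h).s p = if G.s p.1.1 ∈ G.SS then G.r p.1.1 else G.s p.1.1 := rfl
@[simp] lemma rev_r (p : G.REdge) :
    (rev G h).r p = if G.s p.1.1 ∈ G.SS then G.s p.1.1 else G.r p.1.1 := rfl
@[simp] lemma rev_w (p : G.REdge) :
    (rev G h).w p = if G.s p.1.1 ∈ G.SS then 1 else G.w p.1.1 := rfl

lemma rev_kept_not_rev {x : G.REdge} (hx : G.s x.1.1 ∈ G.SS) :
    (G.s x.1.1 ∈ G.SS ∧ 1 ≤ x.1.2 ∧ x.1.2 ≤ G.w x.1.1) := by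
  rcases x.2 with hv | hv
  · exact hv
  · exact absurd hx hv.1

lemma rev_kept_idx {x : G.REdge} (hx : G.s x.1.1 ∉ G.SS) : x.1.2 = 0 := by
  rcases x.2 with hv | hv
  · exact absurd hv.1 hx
  · exact hv.2

/-- Classification of the edges of the reversed graph emitted at `v`. -/
lemma rev_src_cases {x : G.REdge} {v : G.V} (hx : (rev G h).s x = v) :
    (G.s x.1.1 ∈ G.SS ∧ G.r x.1.1 = v ∧ 1 ≤ x.1.2 ∧ x.1.2 ≤ G.w x.1.1) ∨
    (G.s x.1.1 ∉ G.SS ∧ G.s x.1.1 = v ∧ x.1.2 = 0) := by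
  by_cases hs : G.s x.1.1 ∈ G.SS
  · obtain ⟨-, h1, h2⟩ := rev_kept_not_rev hs
    rw [rev_s, if_pos hs] at hx
    exact Or.inl ⟨hs, hx, h1, h2⟩
  · rw [rev_s, if_neg hs] at hx
    exact Or.inr ⟨hs, hx, rev_kept_idx hs⟩

lemma rev_vw_of_not_mem {v : G.V} (hv : v ∉ G.SS) : (rev G h).vw v = G.vw v := by
  apply le_antisymm
  · apply Finset.sup_le
    intro x hx
    rw [mem_rowFinite_toFinset] at hx
    rcases rev_src_cases h hx with ⟨hs, hr, -, -⟩ | ⟨hs, hsv, -⟩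
    · exact absurd (hr ▸ SS_adj hs ⟨x.1.1, rfl, rfl⟩) hv
    · rw [rev_w, if_neg hs]
      exact Finset.le_sup ((mem_rowFinite_toFinset G).mpr hsv)
  · apply Finset.sup_le
    intro g hg
    rw [mem_rowFinite_toFinset] at hg
    have hgs : G.s g ∉ G.SS := hg ▸ hv
    have hmem : ((⟨(g, 0), Or.inr ⟨hgs, rfl⟩⟩ : REdge G) : (rev G h).E) ∈
        ((rev G h).rowFinite v).toFinset := by
      rw [mem_rowFinite_toFinset, rev_s, if_neg hgs]
      exact hg
    calc G.w g = (rev G h).w ⟨(g, 0), Or.inr ⟨hgs, rfl⟩⟩ := by rw [rev_w, if_neg hgs]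
    _ ≤ _ := Finset.le_sup hmem

lemma rev_vw_of_rev {g : G.E} (hg : G.s g ∈ G.SS) : (rev G h).vw (G.r g) = 1 := by
  apply le_antisymm
  · apply Finset.sup_le
    intro x hx
    rw [mem_rowFinite_toFinset] at hx
    rcases rev_src_cases h hx with ⟨hs, -, -, -⟩ | ⟨hs, hsv, -⟩
    · rw [rev_w, if_pos hs]
    · exact absurd (hsv ▸ SS_adj hg ⟨g, rfl, rfl⟩) hs
  · have hmem : ((⟨(g, 1), Or.inl ⟨hg, le_rfl, G.w_pos g⟩⟩ : REdge G) : (rev G h).E) ∈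
        ((rev G h).rowFinite (G.r g)).toFinset := by
      rw [mem_rowFinite_toFinset, rev_s, if_pos hg]
    calc (1 : ℕ) = (rev G h).w ⟨(g, 1), Or.inl ⟨hg, le_rfl, G.w_pos g⟩⟩ := by
          rw [rev_w, if_pos hg]
    _ ≤ _ := Finset.le_sup hmem

lemma rev_weighted_iff {x : G.REdge} :
    (rev G h).Weighted x ↔ G.s x.1.1 ∉ G.SS ∧ G.Weighted x.1.1 := by
  unfold Weighted
  by_cases hs : G.s x.1.1 ∈ G.SS
  · rw [rev_w, if_pos hs]
    simp [hs]
  · rw [rev_w, if_neg hs]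
    simp [hs, Weighted]

lemma rev_cond1 : ∀ e, (rev G h).Weighted e → ∀ f, (rev G h).s f ≠ (rev G h).r e := by
  intro e he f hf
  obtain ⟨hse, hwe⟩ := (rev_weighted_iff h).mp he
  rw [rev_r, if_neg hse] at hf
  rcases rev_src_cases h hf with ⟨hs, hr, -, -⟩ | ⟨hs, hsv, -⟩
  · exact no_SS_into h hwe hse hs hr
  · exact hs (hsv ▸ r_mem_SS hwe)

lemma rev_cond2 : ∀ e f, (rev G h).Weighted e → (rev G h).Weighted f →
    (rev G h).s e = (rev G h).s f → e = f := by
  intro e f he hf hs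
  obtain ⟨hse, hwe⟩ := (rev_weighted_iff h).mp he
  obtain ⟨hsf, hwf⟩ := (rev_weighted_iff h).mp hf
  rw [rev_s, if_neg hse, rev_s, if_neg hsf] at hs
  have h11 : e.1.1 = f.1.1 := h.1 e.1.1 f.1.1 hwe hwf hs
  have h12 : e.1.2 = f.1.2 := by rw [rev_kept_idx hse, rev_kept_idx hsf]
  exact Subtype.ext (Prod.ext h11 h12)

lemma rev_cond3 : ∀ e f, (rev G h).Weighted e → (rev G h).Weighted f →
    (rev G h).r e = (rev G h).r f → e = f := by
  intro e f he hf hr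
  obtain ⟨hse, hwe⟩ := (rev_weighted_iff h).mp he
  obtain ⟨hsf, hwf⟩ := (rev_weighted_iff h).mp hf
  rw [rev_r, if_neg hse, rev_r, if_neg hsf] at hr
  have h11 : e.1.1 = f.1.1 := by
    by_contra hne
    have hil : G.InLine e.1.1 f.1.1 := by
      by_contra hnil
      exact h.2.2.1 e.1.1 f.1.1 hwe hwf hnil (G.r e.1.1)
        ⟨Relation.ReflTransGen.refl, hr ▸ Relation.ReflTransGen.refl⟩
    rcases hil with h' | h' | h'
    · exact hne h'
    · exact hsf ⟨e.1.1, hwe, h'⟩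
    · exact hse ⟨f.1.1, hwf, h'⟩
  have h12 : e.1.2 = f.1.2 := by rw [rev_kept_idx hse, rev_kept_idx hsf]
  exact Subtype.ext (Prod.ext h11 h12)

end WGraph
section RevAlg

open WGraph

variable {G : WGraph}

/-- Forward generator map. -/
noncomputable def fwdGen (h : G.LPA) : WGen G → WGen (G.rev h)
  | .vtx v => .vtx v
  | .edge e i h1 h2 =>
      if hs : G.s e ∈ G.SS then
        .ghost ⟨(e, i), Or.inl ⟨hs, h1, h2⟩⟩ 1 le_rfl
          (by rw [WGraph.rev_w, if_pos hs])
      else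
        .edge ⟨(e, 0), Or.inr ⟨hs, rfl⟩⟩ i h1
          (by rw [WGraph.rev_w, if_neg hs]; exact h2)
  | .ghost e i h1 h2 =>
      if hs : G.s e ∈ G.SS then
        .edge ⟨(e, i), Or.inl ⟨hs, h1, h2⟩⟩ 1 le_rfl
          (by rw [WGraph.rev_w, if_pos hs])
      else
        .ghost ⟨(e, 0), Or.inr ⟨hs, rfl⟩⟩ i h1
          (by rw [WGraph.rev_w, if_neg hs]; exact h2)

/-- Backward generator map. -/
noncomputable def bwdGen (h : G.LPA) : WGen (G.rev h) → WGen G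
  | .vtx v => .vtx v
  | .edge x i h1 h2 =>
      if hs : G.s x.1.1 ∈ G.SS then
        .ghost x.1.1 x.1.2 (WGraph.rev_kept_not_rev (x := x) hs).2.1
          (WGraph.rev_kept_not_rev (x := x) hs).2.2
      else
        .edge x.1.1 i h1 (by rw [WGraph.rev_w, if_neg hs] at h2; exact h2)
  | .ghost x i h1 h2 =>
      if hs : G.s x.1.1 ∈ G.SS then
        .edge x.1.1 x.1.2 (WGraph.rev_kept_not_rev (x := x) hs).2.1
          (WGraph.rev_kept_not_rev (x := x) hs).2.2
      else
        .ghost x.1.1 i h1 (by rw [WGraph.rev_w, if_neg hs] at h2; exact h2)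

variable (K : Type) [Field K]

noncomputable def fwdFree (h : G.LPA) :
    FreeAlgebra K (WGen G) →ₐ[K] FreeAlgebra K (WGen (G.rev h)) :=
  FreeAlgebra.lift K (fun x => FreeAlgebra.ι K (fwdGen h x))

noncomputable def bwdFree (h : G.LPA) :
    FreeAlgebra K (WGen (G.rev h)) →ₐ[K] FreeAlgebra K (WGen G) :=
  FreeAlgebra.lift K (fun x => FreeAlgebra.ι K (bwdGen h x))

variable (h : G.LPA)

@[simp] lemma fwdFree_ι (x : WGen G) :
    fwdFree K h (FreeAlgebra.ι K x) = FreeAlgebra.ι K (fwdGen h x) := by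
  simp [fwdFree]

@[simp] lemma bwdFree_ι (x : WGen (G.rev h)) :
    bwdFree K h (FreeAlgebra.ι K x) = FreeAlgebra.ι K (bwdGen h x) := by
  simp [bwdFree]

lemma fwd_fvtx (v : G.V) : fwdFree K h (fvtx G K v) = fvtx (G.rev h) K v := by
  rw [fvtx, fwdFree_ι]; rfl

lemma bwd_fvtx (v : G.V) : bwdFree K h (fvtx (G.rev h) K v) = fvtx G K v := by
  rw [fvtx, bwdFree_ι]; rfl

lemma fedge_zero {G' : WGraph} {e : G'.E} {i : ℕ} (hc : ¬(1 ≤ i ∧ i ≤ G'.w e)) :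
    fedge G' K e i = 0 := dif_neg hc

lemma fghost_zero {G' : WGraph} {e : G'.E} {i : ℕ} (hc : ¬(1 ≤ i ∧ i ≤ G'.w e)) :
    fghost G' K e i = 0 := dif_neg hc

lemma fwd_fedge_S {e : G.E} {i : ℕ} (hs : G.s e ∈ G.SS) (h1 : 1 ≤ i)
    (h2 : i ≤ G.w e) : fwdFree K h (fedge G K e i) =
      fghost (G.rev h) K ⟨(e, i), Or.inl ⟨hs, h1, h2⟩⟩ 1 := by
  rw [fedge, dif_pos (⟨h1, h2⟩ : 1 ≤ i ∧ i ≤ G.w e), fwdFree_ι, fghost, dif_pos]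
  · show FreeAlgebra.ι K (fwdGen h (WGen.edge e i h1 h2)) = _
    simp only [fwdGen]
    rw [dif_pos hs]
  · exact ⟨le_rfl, by rw [WGraph.rev_w, if_pos hs]⟩

lemma fwd_fghost_S {e : G.E} {i : ℕ} (hs : G.s e ∈ G.SS) (h1 : 1 ≤ i)
    (h2 : i ≤ G.w e) : fwdFree K h (fghost G K e i) =
      fedge (G.rev h) K ⟨(e, i), Or.inl ⟨hs, h1, h2⟩⟩ 1 := by
  rw [fghost, dif_pos (⟨h1, h2⟩ : 1 ≤ i ∧ i ≤ G.w e), fwdFree_ι, fedge, dif_pos]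
  · show FreeAlgebra.ι K (fwdGen h (WGen.ghost e i h1 h2)) = _
    simp only [fwdGen]
    rw [dif_pos hs]
  · exact ⟨le_rfl, by rw [WGraph.rev_w, if_pos hs]⟩

lemma fwd_fedge_ns {e : G.E} (hs : G.s e ∉ G.SS) (i : ℕ) :
    fwdFree K h (fedge G K e i) = fedge (G.rev h) K ⟨(e, 0), Or.inr ⟨hs, rfl⟩⟩ i := by
  have hw : (G.rev h).w ⟨(e, 0), Or.inr ⟨hs, rfl⟩⟩ = G.w e := by
    rw [WGraph.rev_w, if_neg hs]
  by_cases hc : 1 ≤ i ∧ i ≤ G.w e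
  · rw [fedge, dif_pos hc, fwdFree_ι, fedge, dif_pos (by rw [hw]; exact hc)]
    show FreeAlgebra.ι K (fwdGen h (WGen.edge e i hc.1 hc.2)) = _
    simp only [fwdGen]
    rw [dif_neg hs]
  · rw [fedge, dif_neg hc, map_zero, fedge, dif_neg (by rw [hw]; exact hc)]

lemma fwd_fghost_ns {e : G.E} (hs : G.s e ∉ G.SS) (i : ℕ) :
    fwdFree K h (fghost G K e i) = fghost (G.rev h) K ⟨(e, 0), Or.inr ⟨hs, rfl⟩⟩ i := by
  have hw : (G.rev h).w ⟨(e, 0), Or.inr ⟨hs, rfl⟩⟩ = G.w e := by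
    rw [WGraph.rev_w, if_neg hs]
  by_cases hc : 1 ≤ i ∧ i ≤ G.w e
  · rw [fghost, dif_pos hc, fwdFree_ι, fghost, dif_pos (by rw [hw]; exact hc)]
    show FreeAlgebra.ι K (fwdGen h (WGen.ghost e i hc.1 hc.2)) = _
    simp only [fwdGen]
    rw [dif_neg hs]
  · rw [fghost, dif_neg hc, map_zero, fghost, dif_neg (by rw [hw]; exact hc)]

lemma bwd_fedge_rev {x : G.REdge} (hs : G.s x.1.1 ∈ G.SS) :
    bwdFree K h (fedge (G.rev h) K x 1) = fghost G K x.1.1 x.1.2 := by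
  have hcond : (1 : ℕ) ≤ 1 ∧ 1 ≤ (G.rev h).w x := ⟨le_rfl, by rw [WGraph.rev_w, if_pos hs]⟩
  rw [fedge, dif_pos hcond, bwdFree_ι, fghost,
    dif_pos ⟨(WGraph.rev_kept_not_rev (x := x) hs).2.1, (WGraph.rev_kept_not_rev (x := x) hs).2.2⟩]
  show FreeAlgebra.ι K (bwdGen h (WGen.edge x 1 hcond.1 hcond.2)) = _
  simp only [bwdGen]
  rw [dif_pos hs]

lemma bwd_fghost_rev {x : G.REdge} (hs : G.s x.1.1 ∈ G.SS) :
    bwdFree K h (fghost (G.rev h) K x 1) = fedge G K x.1.1 x.1.2 := by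
  have hcond : (1 : ℕ) ≤ 1 ∧ 1 ≤ (G.rev h).w x := ⟨le_rfl, by rw [WGraph.rev_w, if_pos hs]⟩
  rw [fghost, dif_pos hcond, bwdFree_ι, fedge,
    dif_pos ⟨(WGraph.rev_kept_not_rev (x := x) hs).2.1, (WGraph.rev_kept_not_rev (x := x) hs).2.2⟩]
  show FreeAlgebra.ι K (bwdGen h (WGen.ghost x 1 hcond.1 hcond.2)) = _
  simp only [bwdGen]
  rw [dif_pos hs]

lemma bwd_fedge_kept {x : G.REdge} (hs : G.s x.1.1 ∉ G.SS) (i : ℕ) :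
    bwdFree K h (fedge (G.rev h) K x i) = fedge G K x.1.1 i := by
  have hw : (G.rev h).w x = G.w x.1.1 := by rw [WGraph.rev_w, if_neg hs]
  by_cases hc : 1 ≤ i ∧ i ≤ (G.rev h).w x
  · rw [fedge, dif_pos hc, bwdFree_ι, fedge, dif_pos (by rw [← hw]; exact hc)]
    show FreeAlgebra.ι K (bwdGen h (WGen.edge x i hc.1 hc.2)) = _
    simp only [bwdGen]
    rw [dif_neg hs]
  · rw [fedge, dif_neg hc, map_zero, fedge, dif_neg (by rw [← hw]; exact hc)]

lemma bwd_fghost_kept {x : G.REdge} (hs : G.s x.1.1 ∉ G.SS) (i : ℕ) :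
    bwdFree K h (fghost (G.rev h) K x i) = fghost G K x.1.1 i := by
  have hw : (G.rev h).w x = G.w x.1.1 := by rw [WGraph.rev_w, if_neg hs]
  by_cases hc : 1 ≤ i ∧ i ≤ (G.rev h).w x
  · rw [fghost, dif_pos hc, bwdFree_ι, fghost, dif_pos (by rw [← hw]; exact hc)]
    show FreeAlgebra.ι K (bwdGen h (WGen.ghost x i hc.1 hc.2)) = _
    simp only [bwdGen]
    rw [dif_neg hs]
  · rw [fghost, dif_neg hc, map_zero, fghost, dif_neg (by rw [← hw]; exact hc)]

lemma bwd_fwd_gen (x : WGen G) : bwdGen h (fwdGen h x) = x := by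
  cases x with
  | vtx v => rfl
  | edge e i h1 h2 =>
      simp only [fwdGen]
      by_cases hs : G.s e ∈ G.SS
      · rw [dif_pos hs]
        simp only [bwdGen]
        rw [dif_pos hs]
      · rw [dif_neg hs]
        simp only [bwdGen]
        rw [dif_neg hs]
  | ghost e i h1 h2 =>
      simp only [fwdGen]
      by_cases hs : G.s e ∈ G.SS
      · rw [dif_pos hs]
        simp only [bwdGen]
        rw [dif_pos hs]
      · rw [dif_neg hs]
        simp only [bwdGen]
        rw [dif_neg hs]

lemma fwd_bwd_gen (y : WGen (G.rev h)) : fwdGen h (bwdGen h y) = y := by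
  cases y with
  | vtx v => rfl
  | edge x i h1 h2 =>
      by_cases hs : G.s x.1.1 ∈ G.SS
      · have hi : i = 1 := by
          have := h2
          rw [WGraph.rev_w, if_pos hs] at this
          omega
        subst hi
        simp only [bwdGen]
        rw [dif_pos hs]
        simp only [fwdGen]
        rw [dif_pos hs]
      · have hm : x.1.2 = 0 := WGraph.rev_kept_idx hs
        simp only [bwdGen]
        rw [dif_neg hs]
        simp only [fwdGen]
        rw [dif_neg hs]
        congr 1
        exact Subtype.ext (Prod.ext rfl hm.symm)
  | ghost x i h1 h2 =>
      by_cases hs : G.s x.1.1 ∈ G.SS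
      · have hi : i = 1 := by
          have := h2
          rw [WGraph.rev_w, if_pos hs] at this
          omega
        subst hi
        simp only [bwdGen]
        rw [dif_pos hs]
        simp only [fwdGen]
        rw [dif_pos hs]
      · have hm : x.1.2 = 0 := WGraph.rev_kept_idx hs
        simp only [bwdGen]
        rw [dif_neg hs]
        simp only [fwdGen]
        rw [dif_neg hs]
        congr 1
        exact Subtype.ext (Prod.ext rfl hm.symm)

end RevAlg
section RevRel

open WGraph

variable {G : WGraph} (K : Type) [Field K] (h : G.LPA)

lemma wmk_rel {G' : WGraph} {x y : FreeAlgebra K (WGen G')} (hr : WRel G' K x y) :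
    wmk G' K x = wmk G' K y := RingQuot.mkAlgHom_rel K hr

lemma fwd_rel : ∀ ⦃x y : FreeAlgebra K (WGen G)⦄, WRel G K x y →
    ((wmk (G.rev h) K).comp (fwdFree K h)) x = ((wmk (G.rev h) K).comp (fwdFree K h)) y := by
  intro x y hxy
  simp only [AlgHom.comp_apply]
  induction hxy with
  | vtxMul u v =>
      have hL : fwdFree K h (fvtx G K u * fvtx G K v)
          = fvtx (G.rev h) K u * fvtx (G.rev h) K v := by
        rw [map_mul, fwd_fvtx, fwd_fvtx]
      have hR : fwdFree K h (if u = v then fvtx G K u else 0)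
          = (if u = v then fvtx (G.rev h) K u else 0) := by
        split_ifs
        · rw [fwd_fvtx]
        · rw [map_zero]
      rw [hL, hR]
      exact wmk_rel K (WRel.vtxMul (G := G.rev h) (K := K) u v)
  | srcEdge e i =>
      by_cases hc : 1 ≤ i ∧ i ≤ G.w e
      · obtain ⟨h1, h2⟩ := hc
        by_cases hs : G.s e ∈ G.SS
        · have hrx : (G.rev h).r (⟨(e, i), Or.inl ⟨hs, h1, h2⟩⟩ : G.REdge) = G.s e := by
            rw [WGraph.rev_r, if_pos hs]
          have hL : fwdFree K h (fvtx G K (G.s e) * fedge G K e i)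
              = fvtx (G.rev h) K ((G.rev h).r (⟨(e, i), Or.inl ⟨hs, h1, h2⟩⟩ : G.REdge)) *
                fghost (G.rev h) K ⟨(e, i), Or.inl ⟨hs, h1, h2⟩⟩ 1 := by
            rw [map_mul, fwd_fvtx, fwd_fedge_S K h hs h1 h2, hrx]
          rw [hL, fwd_fedge_S K h hs h1 h2]
          exact wmk_rel K (WRel.rngGhost (G := G.rev h) (K := K) _ 1)
        · have hsx : (G.rev h).s (⟨(e, 0), Or.inr ⟨hs, rfl⟩⟩ : G.REdge) = G.s e := by
            rw [WGraph.rev_s, if_neg hs]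
          have hL : fwdFree K h (fvtx G K (G.s e) * fedge G K e i)
              = fvtx (G.rev h) K ((G.rev h).s (⟨(e, 0), Or.inr ⟨hs, rfl⟩⟩ : G.REdge)) *
                fedge (G.rev h) K ⟨(e, 0), Or.inr ⟨hs, rfl⟩⟩ i := by
            rw [map_mul, fwd_fvtx, fwd_fedge_ns K h hs i, hsx]
          rw [hL, fwd_fedge_ns K h hs i]
          exact wmk_rel K (WRel.srcEdge (G := G.rev h) (K := K) _ i)
      · rw [fedge_zero K hc]
        simp
  | edgeRng e i =>
      by_cases hc : 1 ≤ i ∧ i ≤ G.w e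
      · obtain ⟨h1, h2⟩ := hc
        by_cases hs : G.s e ∈ G.SS
        · have hsx : (G.rev h).s (⟨(e, i), Or.inl ⟨hs, h1, h2⟩⟩ : G.REdge) = G.r e := by
            rw [WGraph.rev_s, if_pos hs]
          have hL : fwdFree K h (fedge G K e i * fvtx G K (G.r e))
              = fghost (G.rev h) K ⟨(e, i), Or.inl ⟨hs, h1, h2⟩⟩ 1 *
                fvtx (G.rev h) K ((G.rev h).s (⟨(e, i), Or.inl ⟨hs, h1, h2⟩⟩ : G.REdge)) := by
            rw [map_mul, fwd_fvtx, fwd_fedge_S K h hs h1 h2, hsx]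
          rw [hL, fwd_fedge_S K h hs h1 h2]
          exact wmk_rel K (WRel.ghostSrc (G := G.rev h) (K := K) _ 1)
        · have hrx : (G.rev h).r (⟨(e, 0), Or.inr ⟨hs, rfl⟩⟩ : G.REdge) = G.r e := by
            rw [WGraph.rev_r, if_neg hs]
          have hL : fwdFree K h (fedge G K e i * fvtx G K (G.r e))
              = fedge (G.rev h) K ⟨(e, 0), Or.inr ⟨hs, rfl⟩⟩ i *
                fvtx (G.rev h) K ((G.rev h).r (⟨(e, 0), Or.inr ⟨hs, rfl⟩⟩ : G.REdge)) := by
            rw [map_mul, fwd_fvtx, fwd_fedge_ns K h hs i, hrx]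
          rw [hL, fwd_fedge_ns K h hs i]
          exact wmk_rel K (WRel.edgeRng (G := G.rev h) (K := K) _ i)
      · rw [fedge_zero K hc]
        simp
  | rngGhost e i =>
      by_cases hc : 1 ≤ i ∧ i ≤ G.w e
      · obtain ⟨h1, h2⟩ := hc
        by_cases hs : G.s e ∈ G.SS
        · have hsx : (G.rev h).s (⟨(e, i), Or.inl ⟨hs, h1, h2⟩⟩ : G.REdge) = G.r e := by
            rw [WGraph.rev_s, if_pos hs]
          have hL : fwdFree K h (fvtx G K (G.r e) * fghost G K e i)
              = fvtx (G.rev h) K ((G.rev h).s (⟨(e, i), Or.inl ⟨hs, h1, h2⟩⟩ : G.REdge)) *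
                fedge (G.rev h) K ⟨(e, i), Or.inl ⟨hs, h1, h2⟩⟩ 1 := by
            rw [map_mul, fwd_fvtx, fwd_fghost_S K h hs h1 h2, hsx]
          rw [hL, fwd_fghost_S K h hs h1 h2]
          exact wmk_rel K (WRel.srcEdge (G := G.rev h) (K := K) _ 1)
        · have hrx : (G.rev h).r (⟨(e, 0), Or.inr ⟨hs, rfl⟩⟩ : G.REdge) = G.r e := by
            rw [WGraph.rev_r, if_neg hs]
          have hL : fwdFree K h (fvtx G K (G.r e) * fghost G K e i)
              = fvtx (G.rev h) K ((G.rev h).r (⟨(e, 0), Or.inr ⟨hs, rfl⟩⟩ : G.REdge)) *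
                fghost (G.rev h) K ⟨(e, 0), Or.inr ⟨hs, rfl⟩⟩ i := by
            rw [map_mul, fwd_fvtx, fwd_fghost_ns K h hs i, hrx]
          rw [hL, fwd_fghost_ns K h hs i]
          exact wmk_rel K (WRel.rngGhost (G := G.rev h) (K := K) _ i)
      · rw [fghost_zero K hc]
        simp
  | ghostSrc e i =>
      by_cases hc : 1 ≤ i ∧ i ≤ G.w e
      · obtain ⟨h1, h2⟩ := hc
        by_cases hs : G.s e ∈ G.SS
        · have hrx : (G.rev h).r (⟨(e, i), Or.inl ⟨hs, h1, h2⟩⟩ : G.REdge) = G.s e := by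
            rw [WGraph.rev_r, if_pos hs]
          have hL : fwdFree K h (fghost G K e i * fvtx G K (G.s e))
              = fedge (G.rev h) K ⟨(e, i), Or.inl ⟨hs, h1, h2⟩⟩ 1 *
                fvtx (G.rev h) K ((G.rev h).r (⟨(e, i), Or.inl ⟨hs, h1, h2⟩⟩ : G.REdge)) := by
            rw [map_mul, fwd_fvtx, fwd_fghost_S K h hs h1 h2, hrx]
          rw [hL, fwd_fghost_S K h hs h1 h2]
          exact wmk_rel K (WRel.edgeRng (G := G.rev h) (K := K) _ 1)
        · have hsx : (G.rev h).s (⟨(e, 0), Or.inr ⟨hs, rfl⟩⟩ : G.REdge) = G.s e := by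
            rw [WGraph.rev_s, if_neg hs]
          have hL : fwdFree K h (fghost G K e i * fvtx G K (G.s e))
              = fghost (G.rev h) K ⟨(e, 0), Or.inr ⟨hs, rfl⟩⟩ i *
                fvtx (G.rev h) K ((G.rev h).s (⟨(e, 0), Or.inr ⟨hs, rfl⟩⟩ : G.REdge)) := by
            rw [map_mul, fwd_fvtx, fwd_fghost_ns K h hs i, hsx]
          rw [hL, fwd_fghost_ns K h hs i]
          exact wmk_rel K (WRel.ghostSrc (G := G.rev h) (K := K) _ i)
      · rw [fghost_zero K hc]
        simp
  | ck1 v e f he hf =>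
      by_cases hv : v ∈ G.SS
      · obtain rfl : e = f := WGraph.det h hv he hf
        have hs : G.s e ∈ G.SS := by rw [he]; exact hv
        have hre : G.r e ∈ G.SS := WGraph.SS_adj hv ⟨e, he, rfl⟩
        have hvw : G.vw v = G.w e := WGraph.vw_single h hv he
        have hvw' : (G.rev h).vw (G.r e) = 1 := WGraph.rev_vw_of_rev h hs
        have hL : fwdFree K h (∑ i ∈ Finset.Icc 1 (G.vw v), fghost G K e i * fedge G K e i)
            = ∑ x ∈ ((G.rev h).rowFinite (G.r e)).toFinset,
                fedge (G.rev h) K x 1 * fghost (G.rev h) K x 1 := by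
          rw [map_sum]
          refine Finset.sum_bij (fun i hi => (⟨(e, i), Or.inl ⟨hs, (Finset.mem_Icc.mp hi).1,
            hvw ▸ (Finset.mem_Icc.mp hi).2⟩⟩ : G.REdge)) ?_ ?_ ?_ ?_
          · intro a ha
            rw [WGraph.mem_rowFinite_toFinset, WGraph.rev_s, if_pos hs]
          · intro a₁ h₁ a₂ h₂ hh
            simpa using congrArg (fun z : G.REdge => z.1.2) hh
          · intro b hb
            rw [WGraph.mem_rowFinite_toFinset] at hb
            rcases WGraph.rev_src_cases h hb with ⟨hsb, hrb, hb1, hb2⟩ | ⟨hsb, hsv, -⟩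
            · have hbe : b.1.1 = e := WGraph.into_unique h hsb hs hrb
              refine ⟨b.1.2, Finset.mem_Icc.mpr ⟨hb1, by rw [hvw, ← hbe]; exact hb2⟩, ?_⟩
              exact Subtype.ext (Prod.ext hbe.symm rfl)
            · exact absurd (hsv ▸ hre) hsb
          · intro a ha
            rw [map_mul, fwd_fghost_S K h hs (Finset.mem_Icc.mp ha).1
              (hvw ▸ (Finset.mem_Icc.mp ha).2), fwd_fedge_S K h hs (Finset.mem_Icc.mp ha).1
              (hvw ▸ (Finset.mem_Icc.mp ha).2)]
        have hR : fwdFree K h (if e = e then fvtx G K (G.r e) else 0)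
            = fvtx (G.rev h) K (G.r e) := by
          rw [if_pos rfl, fwd_fvtx]
        rw [hL, hR]
        have hrel := wmk_rel K (WRel.ck2 (G := G.rev h) (K := K) (G.r e) 1 1 le_rfl
          (by rw [hvw']) le_rfl (by rw [hvw']))
        rw [if_pos rfl] at hrel
        exact hrel
      · have hse : G.s e ∉ G.SS := by rw [he]; exact hv
        have hsf : G.s f ∉ G.SS := by rw [hf]; exact hv
        have hvw' : (G.rev h).vw v = G.vw v := WGraph.rev_vw_of_not_mem h hv
        have hL : fwdFree K h (∑ i ∈ Finset.Icc 1 (G.vw v), fghost G K e i * fedge G K f i)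
            = ∑ i ∈ Finset.Icc 1 ((G.rev h).vw v),
                fghost (G.rev h) K ⟨(e, 0), Or.inr ⟨hse, rfl⟩⟩ i *
                fedge (G.rev h) K ⟨(f, 0), Or.inr ⟨hsf, rfl⟩⟩ i := by
          rw [map_sum, hvw']
          exact Finset.sum_congr rfl fun i _ => by
            rw [map_mul, fwd_fghost_ns K h hse i, fwd_fedge_ns K h hsf i]
        rw [hL]
        have hrel := wmk_rel K (WRel.ck1 (G := G.rev h) (K := K) v ⟨(e, 0), Or.inr ⟨hse, rfl⟩⟩
          ⟨(f, 0), Or.inr ⟨hsf, rfl⟩⟩ (by rw [WGraph.rev_s, if_neg hse]; exact he)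
          (by rw [WGraph.rev_s, if_neg hsf]; exact hf))
        rw [hrel]
        by_cases hef : e = f
        · subst hef
          rw [if_pos rfl, if_pos rfl, fwd_fvtx]
          have : (G.rev h).r (⟨(e, 0), Or.inr ⟨hse, rfl⟩⟩ : G.REdge) = G.r e := by
            rw [WGraph.rev_r, if_neg hse]
          rw [this]
        · rw [if_neg hef, if_neg (fun hq => hef (congrArg (fun z : G.REdge => z.1.1) hq))]
          simp
  | ck2 v i j hi1 hi2 hj1 hj2 =>
      by_cases hv : v ∈ G.SS
      · obtain ⟨e, he⟩ := WGraph.exists_edge_of_vw_pos (le_trans hi1 hi2)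
        have hs : G.s e ∈ G.SS := by rw [he]; exact hv
        have hvw : G.vw v = G.w e := WGraph.vw_single h hv he
        have hi2' : i ≤ G.w e := hvw ▸ hi2
        have hj2' : j ≤ G.w e := hvw ▸ hj2
        have hL : fwdFree K h (∑ g ∈ (G.rowFinite v).toFinset, fedge G K g i * fghost G K g j)
            = fghost (G.rev h) K ⟨(e, i), Or.inl ⟨hs, hi1, hi2'⟩⟩ 1 *
              fedge (G.rev h) K ⟨(e, j), Or.inl ⟨hs, hj1, hj2'⟩⟩ 1 := by
          rw [WGraph.toFinset_single h hv he, Finset.sum_singleton, map_mul,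
            fwd_fedge_S K h hs hi1 hi2', fwd_fghost_S K h hs hj1 hj2']
        rw [hL]
        have hvw1 : (G.rev h).vw (G.r e) = 1 := WGraph.rev_vw_of_rev h hs
        have hrel := wmk_rel K (WRel.ck1 (G := G.rev h) (K := K) (G.r e)
          ⟨(e, i), Or.inl ⟨hs, hi1, hi2'⟩⟩ ⟨(e, j), Or.inl ⟨hs, hj1, hj2'⟩⟩
          (by rw [WGraph.rev_s, if_pos hs]) (by rw [WGraph.rev_s, if_pos hs]))
        rw [hvw1, Finset.Icc_self, Finset.sum_singleton] at hrel
        rw [hrel]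
        by_cases hij : i = j
        · subst hij
          rw [if_pos rfl, if_pos rfl, fwd_fvtx]
          have : (G.rev h).r (⟨(e, i), Or.inl ⟨hs, hi1, hi2'⟩⟩ : G.REdge) = v := by
            rw [WGraph.rev_r, if_pos hs]
            exact he
          rw [this]
        · rw [if_neg hij, if_neg (fun hq => hij (by
            simpa using congrArg (fun z : G.REdge => z.1.2) hq))]
          simp
      · have hvw' : (G.rev h).vw v = G.vw v := WGraph.rev_vw_of_not_mem h hv
        have hL : fwdFree K h (∑ g ∈ (G.rowFinite v).toFinset, fedge G K g i * fghost G K g j)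
            = ∑ x ∈ ((G.rev h).rowFinite v).toFinset,
                fedge (G.rev h) K x i * fghost (G.rev h) K x j := by
          rw [map_sum]
          refine Finset.sum_bij (fun g hg => (⟨(g, 0), Or.inr
            ⟨by rw [(WGraph.mem_rowFinite_toFinset G).mp hg]; exact hv, rfl⟩⟩ : G.REdge))
            ?_ ?_ ?_ ?_
          · intro g hg
            rw [WGraph.mem_rowFinite_toFinset] at hg
            rw [WGraph.mem_rowFinite_toFinset, WGraph.rev_s,
              if_neg (by rw [hg]; exact hv)]
            exact hg
          · intro a₁ h₁ a₂ h₂ hh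
            exact congrArg (fun z : G.REdge => z.1.1) hh
          · intro b hb
            rw [WGraph.mem_rowFinite_toFinset] at hb
            rcases WGraph.rev_src_cases h hb with ⟨hsb, hrb, -, -⟩ | ⟨hsb, hsv, hb0⟩
            · exact absurd (hrb ▸ WGraph.SS_adj hsb ⟨b.1.1, rfl, rfl⟩) hv
            · refine ⟨b.1.1, (WGraph.mem_rowFinite_toFinset G).mpr hsv, ?_⟩
              exact Subtype.ext (Prod.ext rfl hb0.symm)
          · intro g hg
            have hgs : G.s g ∉ G.SS := by
              rw [(WGraph.mem_rowFinite_toFinset G).mp hg]; exact hv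
            rw [map_mul, fwd_fedge_ns K h hgs i, fwd_fghost_ns K h hgs j]
        rw [hL]
        have hrel := wmk_rel K (WRel.ck2 (G := G.rev h) (K := K) v i j hi1
          (by rw [hvw']; exact hi2) hj1 (by rw [hvw']; exact hj2))
        rw [hrel]
        by_cases hij : i = j
        · rw [if_pos hij, if_pos hij, fwd_fvtx]
        · rw [if_neg hij, if_neg hij]
          simp

end RevRel
section RevRelBwd

open WGraph

variable {G : WGraph} (K : Type) [Field K] (h : G.LPA)

lemma bwd_rel : ∀ ⦃x y : FreeAlgebra K (WGen (G.rev h))⦄, WRel (G.rev h) K x y →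
    ((wmk G K).comp (bwdFree K h)) x = ((wmk G K).comp (bwdFree K h)) y := by
  intro x y hxy
  simp only [AlgHom.comp_apply]
  induction hxy with
  | vtxMul u v =>
      have hL : bwdFree K h (fvtx (G.rev h) K u * fvtx (G.rev h) K v)
          = fvtx G K u * fvtx G K v := by
        rw [map_mul, bwd_fvtx, bwd_fvtx]
      have hR : bwdFree K h (if u = v then fvtx (G.rev h) K u else 0)
          = (if u = v then fvtx G K u else 0) := by
        split_ifs
        · rw [bwd_fvtx]
        · rw [map_zero]
      rw [hL, hR]
      exact wmk_rel K (WRel.vtxMul (G := G) (K := K) u v)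
  | srcEdge x i =>
      rcases x with ⟨⟨g, m⟩, hval⟩
      by_cases hs : G.s g ∈ G.SS
      · by_cases hc : 1 ≤ i ∧ i ≤ (G.rev h).w ⟨(g, m), hval⟩
        · have hi : i = 1 := by
            have h2 := hc.2
            rw [WGraph.rev_w, if_pos hs] at h2
            omega
          subst hi
          have hsx : (G.rev h).s (⟨(g, m), hval⟩ : G.REdge) = G.r g := by
            rw [WGraph.rev_s, if_pos hs]
          have hL : bwdFree K h (fvtx (G.rev h) K ((G.rev h).s (⟨(g, m), hval⟩ : G.REdge)) *
              fedge (G.rev h) K ⟨(g, m), hval⟩ 1)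
              = fvtx G K (G.r g) * fghost G K g m := by
            rw [map_mul, bwd_fvtx, bwd_fedge_rev K h hs, hsx]
          rw [hL, bwd_fedge_rev K h hs]
          exact wmk_rel K (WRel.rngGhost g m)
        · rw [fedge_zero K hc]
          simp
      · have hsx : (G.rev h).s (⟨(g, m), hval⟩ : G.REdge) = G.s g := by
          rw [WGraph.rev_s, if_neg hs]
        have hL : bwdFree K h (fvtx (G.rev h) K ((G.rev h).s (⟨(g, m), hval⟩ : G.REdge)) *
            fedge (G.rev h) K ⟨(g, m), hval⟩ i)
            = fvtx G K (G.s g) * fedge G K g i := by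
          rw [map_mul, bwd_fvtx, bwd_fedge_kept K h hs i, hsx]
        rw [hL, bwd_fedge_kept K h hs i]
        exact wmk_rel K (WRel.srcEdge g i)
  | edgeRng x i =>
      rcases x with ⟨⟨g, m⟩, hval⟩
      by_cases hs : G.s g ∈ G.SS
      · by_cases hc : 1 ≤ i ∧ i ≤ (G.rev h).w ⟨(g, m), hval⟩
        · have hi : i = 1 := by
            have h2 := hc.2
            rw [WGraph.rev_w, if_pos hs] at h2
            omega
          subst hi
          have hrx : (G.rev h).r (⟨(g, m), hval⟩ : G.REdge) = G.s g := by
            rw [WGraph.rev_r, if_pos hs]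
          have hL : bwdFree K h (fedge (G.rev h) K ⟨(g, m), hval⟩ 1 *
              fvtx (G.rev h) K ((G.rev h).r (⟨(g, m), hval⟩ : G.REdge)))
              = fghost G K g m * fvtx G K (G.s g) := by
            rw [map_mul, bwd_fvtx, bwd_fedge_rev K h hs, hrx]
          rw [hL, bwd_fedge_rev K h hs]
          exact wmk_rel K (WRel.ghostSrc g m)
        · rw [fedge_zero K hc]
          simp
      · have hrx : (G.rev h).r (⟨(g, m), hval⟩ : G.REdge) = G.r g := by
          rw [WGraph.rev_r, if_neg hs]
        have hL : bwdFree K h (fedge (G.rev h) K ⟨(g, m), hval⟩ i *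
            fvtx (G.rev h) K ((G.rev h).r (⟨(g, m), hval⟩ : G.REdge)))
            = fedge G K g i * fvtx G K (G.r g) := by
          rw [map_mul, bwd_fvtx, bwd_fedge_kept K h hs i, hrx]
        rw [hL, bwd_fedge_kept K h hs i]
        exact wmk_rel K (WRel.edgeRng g i)
  | rngGhost x i =>
      rcases x with ⟨⟨g, m⟩, hval⟩
      by_cases hs : G.s g ∈ G.SS
      · by_cases hc : 1 ≤ i ∧ i ≤ (G.rev h).w ⟨(g, m), hval⟩
        · have hi : i = 1 := by
            have h2 := hc.2
            rw [WGraph.rev_w, if_pos hs] at h2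
            omega
          subst hi
          have hrx : (G.rev h).r (⟨(g, m), hval⟩ : G.REdge) = G.s g := by
            rw [WGraph.rev_r, if_pos hs]
          have hL : bwdFree K h (fvtx (G.rev h) K ((G.rev h).r (⟨(g, m), hval⟩ : G.REdge)) *
              fghost (G.rev h) K ⟨(g, m), hval⟩ 1)
              = fvtx G K (G.s g) * fedge G K g m := by
            rw [map_mul, bwd_fvtx, bwd_fghost_rev K h hs, hrx]
          rw [hL, bwd_fghost_rev K h hs]
          exact wmk_rel K (WRel.srcEdge g m)
        · rw [fghost_zero K hc]
          simp
      · have hrx : (G.rev h).r (⟨(g, m), hval⟩ : G.REdge) = G.r g := by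
          rw [WGraph.rev_r, if_neg hs]
        have hL : bwdFree K h (fvtx (G.rev h) K ((G.rev h).r (⟨(g, m), hval⟩ : G.REdge)) *
            fghost (G.rev h) K ⟨(g, m), hval⟩ i)
            = fvtx G K (G.r g) * fghost G K g i := by
          rw [map_mul, bwd_fvtx, bwd_fghost_kept K h hs i, hrx]
        rw [hL, bwd_fghost_kept K h hs i]
        exact wmk_rel K (WRel.rngGhost g i)
  | ghostSrc x i =>
      rcases x with ⟨⟨g, m⟩, hval⟩
      by_cases hs : G.s g ∈ G.SS
      · by_cases hc : 1 ≤ i ∧ i ≤ (G.rev h).w ⟨(g, m), hval⟩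
        · have hi : i = 1 := by
            have h2 := hc.2
            rw [WGraph.rev_w, if_pos hs] at h2
            omega
          subst hi
          have hsx : (G.rev h).s (⟨(g, m), hval⟩ : G.REdge) = G.r g := by
            rw [WGraph.rev_s, if_pos hs]
          have hL : bwdFree K h (fghost (G.rev h) K ⟨(g, m), hval⟩ 1 *
              fvtx (G.rev h) K ((G.rev h).s (⟨(g, m), hval⟩ : G.REdge)))
              = fedge G K g m * fvtx G K (G.r g) := by
            rw [map_mul, bwd_fvtx, bwd_fghost_rev K h hs, hsx]
          rw [hL, bwd_fghost_rev K h hs]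
          exact wmk_rel K (WRel.edgeRng g m)
        · rw [fghost_zero K hc]
          simp
      · have hsx : (G.rev h).s (⟨(g, m), hval⟩ : G.REdge) = G.s g := by
          rw [WGraph.rev_s, if_neg hs]
        have hL : bwdFree K h (fghost (G.rev h) K ⟨(g, m), hval⟩ i *
            fvtx (G.rev h) K ((G.rev h).s (⟨(g, m), hval⟩ : G.REdge)))
            = fghost G K g i * fvtx G K (G.s g) := by
          rw [map_mul, bwd_fvtx, bwd_fghost_kept K h hs i, hsx]
        rw [hL, bwd_fghost_kept K h hs i]
        exact wmk_rel K (WRel.ghostSrc g i)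
  | ck1 a x y hx hy =>
      rcases x with ⟨⟨g, m⟩, hval⟩
      rcases y with ⟨⟨g', m'⟩, hval'⟩
      by_cases hs : G.s g ∈ G.SS
      · have hra : G.r g = a := by rw [WGraph.rev_s, if_pos hs] at hx; exact hx
        have hs' : G.s g' ∈ G.SS := by
          by_contra hns
          rw [WGraph.rev_s, if_neg hns] at hy
          have haS : a ∈ G.SS := hra ▸ WGraph.SS_adj hs ⟨g, rfl, rfl⟩
          exact hns (hy ▸ haS)
        have hra' : G.r g' = a := by rw [WGraph.rev_s, if_pos hs'] at hy; exact hy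
        obtain rfl : g = g' := (WGraph.into_unique h hs' hs (hra'.trans hra.symm)).symm
        obtain ⟨-, hm1, hm2⟩ := Or.resolve_right hval (fun hc => hc.1 hs)
        obtain ⟨-, hm1', hm2'⟩ := Or.resolve_right hval' (fun hc => hc.1 hs)
        have hvwa : (G.rev h).vw a = 1 := hra ▸ WGraph.rev_vw_of_rev h hs
        have hvws : G.vw (G.s g) = G.w g := WGraph.vw_single h hs rfl
        have hL : bwdFree K h (∑ i ∈ Finset.Icc 1 ((G.rev h).vw a),
            fghost (G.rev h) K ⟨(g, m), hval⟩ i * fedge (G.rev h) K ⟨(g, m'), hval'⟩ i)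
            = fedge G K g m * fghost G K g m' := by
          rw [hvwa, Finset.Icc_self, Finset.sum_singleton, map_mul,
            bwd_fghost_rev K h hs, bwd_fedge_rev K h hs]
        rw [hL]
        have hrel := wmk_rel K (WRel.ck2 (G := G) (K := K) (G.s g) m m' hm1
          (by rw [hvws]; exact hm2) hm1' (by rw [hvws]; exact hm2'))
        rw [WGraph.toFinset_single h hs rfl, Finset.sum_singleton] at hrel
        rw [hrel]
        by_cases hmm : m = m'
        · subst hmm
          rw [if_pos rfl, if_pos rfl, bwd_fvtx]
          have : (G.rev h).r (⟨(g, m), hval⟩ : G.REdge) = G.s g := by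
            rw [WGraph.rev_r, if_pos hs]
          rw [this]
        · rw [if_neg hmm, if_neg (fun hq => hmm (by
            simpa using congrArg (fun z : G.REdge => z.1.2) hq))]
          simp
      · have hsa : G.s g = a := by rw [WGraph.rev_s, if_neg hs] at hx; exact hx
        have hs'k : G.s g' ∉ G.SS := by
          intro hcc
          rw [WGraph.rev_s, if_pos hcc] at hy
          have haS : a ∈ G.SS := hy ▸ WGraph.SS_adj hcc ⟨g', rfl, rfl⟩
          exact hs (hsa ▸ haS)
        have hsa' : G.s g' = a := by rw [WGraph.rev_s, if_neg hs'k] at hy; exact hy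
        have hm0 : m = 0 := (Or.resolve_left hval (fun hc => hs hc.1)).2
        have hm0' : m' = 0 := (Or.resolve_left hval' (fun hc => hs'k hc.1)).2
        subst hm0
        subst hm0'
        have haS : a ∉ G.SS := hsa ▸ hs
        have hvw' : (G.rev h).vw a = G.vw a := WGraph.rev_vw_of_not_mem h haS
        have hL : bwdFree K h (∑ i ∈ Finset.Icc 1 ((G.rev h).vw a),
            fghost (G.rev h) K ⟨(g, 0), hval⟩ i * fedge (G.rev h) K ⟨(g', 0), hval'⟩ i)
            = ∑ i ∈ Finset.Icc 1 (G.vw a), fghost G K g i * fedge G K g' i := by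
          rw [map_sum, hvw']
          exact Finset.sum_congr rfl fun i _ => by
            rw [map_mul, bwd_fghost_kept K h hs i, bwd_fedge_kept K h hs'k i]
        rw [hL]
        have hrel := wmk_rel K (WRel.ck1 (G := G) (K := K) a g g' hsa hsa')
        rw [hrel]
        by_cases hgg : g = g'
        · subst hgg
          rw [if_pos rfl, if_pos rfl, bwd_fvtx]
          have : (G.rev h).r (⟨(g, 0), hval⟩ : G.REdge) = G.r g := by
            rw [WGraph.rev_r, if_neg hs]
          rw [this]
        · rw [if_neg hgg, if_neg (fun hq => hgg (congrArg (fun z : G.REdge => z.1.1) hq))]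
          simp
  | ck2 a i j hi1 hi2 hj1 hj2 =>
      by_cases hex : ∃ g : G.E, G.s g ∈ G.SS ∧ G.r g = a
      · obtain ⟨g, hg, hrg⟩ := hex
        have hvwa : (G.rev h).vw a = 1 := hrg ▸ WGraph.rev_vw_of_rev h hg
        have hi : i = 1 := by rw [hvwa] at hi2; omega
        have hj : j = 1 := by rw [hvwa] at hj2; omega
        subst hi
        subst hj
        have hvws : G.vw (G.s g) = G.w g := WGraph.vw_single h hg rfl
        have haS : a ∈ G.SS := hrg ▸ WGraph.SS_adj hg ⟨g, rfl, rfl⟩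
        have hsum : ∑ mm ∈ Finset.Icc 1 (G.vw (G.s g)), fghost G K g mm * fedge G K g mm
            = ∑ x ∈ ((G.rev h).rowFinite a).toFinset,
                bwdFree K h (fedge (G.rev h) K x 1 * fghost (G.rev h) K x 1) := by
          refine Finset.sum_bij (fun mm hmm => (⟨(g, mm), Or.inl ⟨hg, (Finset.mem_Icc.mp hmm).1,
            hvws ▸ (Finset.mem_Icc.mp hmm).2⟩⟩ : G.REdge)) ?_ ?_ ?_ ?_
          · intro mm hmm
            rw [WGraph.mem_rowFinite_toFinset, WGraph.rev_s, if_pos hg]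
            exact hrg
          · intro a₁ h₁ a₂ h₂ hh
            simpa using congrArg (fun z : G.REdge => z.1.2) hh
          · intro b hb
            rw [WGraph.mem_rowFinite_toFinset] at hb
            rcases WGraph.rev_src_cases h hb with ⟨hsb, hrb, hb1, hb2⟩ | ⟨hsb, hsv, -⟩
            · have hbe : b.1.1 = g := WGraph.into_unique h hsb hg (hrb.trans hrg.symm)
              refine ⟨b.1.2, Finset.mem_Icc.mpr ⟨hb1, by rw [hvws, ← hbe]; exact hb2⟩, ?_⟩
              exact Subtype.ext (Prod.ext hbe.symm rfl)
            · exact absurd (hsv ▸ haS) hsb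
          · intro mm hmm
            rw [map_mul, bwd_fedge_rev K h hg, bwd_fghost_rev K h hg]
        have hL : bwdFree K h (∑ x ∈ ((G.rev h).rowFinite a).toFinset,
            fedge (G.rev h) K x 1 * fghost (G.rev h) K x 1)
            = ∑ mm ∈ Finset.Icc 1 (G.vw (G.s g)), fghost G K g mm * fedge G K g mm := by
          rw [map_sum]
          exact hsum.symm
        rw [hL]
        have hrel := wmk_rel K (WRel.ck1 (G := G) (K := K) (G.s g) g g rfl rfl)
        rw [if_pos rfl] at hrel
        rw [hrel, if_pos rfl, bwd_fvtx, hrg]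
      · by_cases hox : a ∈ G.SS
        · exfalso
          have hempty : ((G.rev h).rowFinite a).toFinset = ∅ := by
            ext x
            simp only [Finset.notMem_empty, iff_false]
            intro hx
            replace hx := (WGraph.mem_rowFinite_toFinset (G.rev h)).mp hx
            rcases WGraph.rev_src_cases h hx with ⟨hsb, hrb, -, -⟩ | ⟨hsb, hsv, -⟩
            · exact hex ⟨x.1.1, hsb, hrb⟩
            · exact hsb (hsv ▸ hox)
          have hz : (G.rev h).vw a = 0 := by
            rw [WGraph.vw, hempty, Finset.sup_empty]
            rfl
          rw [hz] at hi2
          omega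
        · have hvw' : (G.rev h).vw a = G.vw a := WGraph.rev_vw_of_not_mem h hox
          have hsum : ∑ gg ∈ (G.rowFinite a).toFinset, fedge G K gg i * fghost G K gg j
              = ∑ x ∈ ((G.rev h).rowFinite a).toFinset,
                  bwdFree K h (fedge (G.rev h) K x i * fghost (G.rev h) K x j) := by
            refine Finset.sum_bij (fun gg hgg => (⟨(gg, 0), Or.inr
              ⟨by rw [(WGraph.mem_rowFinite_toFinset G).mp hgg]; exact hox, rfl⟩⟩ : G.REdge))
              ?_ ?_ ?_ ?_
            · intro gg hgg
              rw [WGraph.mem_rowFinite_toFinset] at hgg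
              rw [WGraph.mem_rowFinite_toFinset, WGraph.rev_s,
                if_neg (by rw [hgg]; exact hox)]
              exact hgg
            · intro a₁ h₁ a₂ h₂ hh
              exact congrArg (fun z : G.REdge => z.1.1) hh
            · intro b hb
              rw [WGraph.mem_rowFinite_toFinset] at hb
              rcases WGraph.rev_src_cases h hb with ⟨hsb, hrb, -, -⟩ | ⟨hsb, hsv, hb0⟩
              · exact absurd (hrb ▸ WGraph.SS_adj hsb ⟨b.1.1, rfl, rfl⟩) hox
              · refine ⟨b.1.1, (WGraph.mem_rowFinite_toFinset G).mpr hsv, ?_⟩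
                exact Subtype.ext (Prod.ext rfl hb0.symm)
            · intro gg hgg
              have hgs : G.s gg ∉ G.SS := by
                rw [(WGraph.mem_rowFinite_toFinset G).mp hgg]; exact hox
              rw [map_mul, bwd_fedge_kept K h hgs i, bwd_fghost_kept K h hgs j]
          have hL : bwdFree K h (∑ x ∈ ((G.rev h).rowFinite a).toFinset,
              fedge (G.rev h) K x i * fghost (G.rev h) K x j)
              = ∑ gg ∈ (G.rowFinite a).toFinset, fedge G K gg i * fghost G K gg j := by
            rw [map_sum]
            exact hsum.symm
          rw [hL]
          have hrel := wmk_rel K (WRel.ck2 (G := G) (K := K) a i j hi1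
            (by rw [← hvw']; exact hi2) hj1 (by rw [← hvw']; exact hj2))
          rw [hrel]
          by_cases hij : i = j
          · rw [if_pos hij, if_pos hij, bwd_fvtx]
          · rw [if_neg hij, if_neg hij]
            simp

end RevRelBwd
section Assemble

open WGraph

variable {G : WGraph} (K : Type) [Field K] (h : G.LPA)

noncomputable def fwdHom : WLPA G K →ₐ[K] WLPA (G.rev h) K :=
  RingQuot.liftAlgHom K ⟨(wmk (G.rev h) K).comp (fwdFree K h), fwd_rel K h⟩

noncomputable def bwdHom : WLPA (G.rev h) K →ₐ[K] WLPA G K :=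
  RingQuot.liftAlgHom K ⟨(wmk G K).comp (bwdFree K h), bwd_rel K h⟩

lemma fwdHom_wmk (a : FreeAlgebra K (WGen G)) :
    fwdHom K h (wmk G K a) = wmk (G.rev h) K (fwdFree K h a) := by
  unfold fwdHom wmk
  exact RingQuot.liftAlgHom_mkAlgHom_apply _ _ _ _

lemma bwdHom_wmk (a : FreeAlgebra K (WGen (G.rev h))) :
    bwdHom K h (wmk (G.rev h) K a) = wmk G K (bwdFree K h a) := by
  unfold bwdHom wmk
  exact RingQuot.liftAlgHom_mkAlgHom_apply _ _ _ _

lemma wlpa_hom_ext {G' : WGraph} {A : Type} [Semiring A] [Algebra K A]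
    {f g : WLPA G' K →ₐ[K] A}
    (hfg : ∀ x : WGen G',
      f (wmk G' K (FreeAlgebra.ι K x)) = g (wmk G' K (FreeAlgebra.ι K x))) :
    f = g := by
  have hcomp : f.comp (wmk G' K) = g.comp (wmk G' K) :=
    FreeAlgebra.hom_ext (funext fun x => hfg x)
  apply AlgHom.ext
  intro a
  obtain ⟨b, rfl⟩ := RingQuot.mkAlgHom_surjective K (WRel G' K) a
  exact congrArg (fun F : FreeAlgebra K (WGen G') →ₐ[K] A => F b) hcomp

noncomputable def revEquiv : WLPA (G.rev h) K ≃ₐ[K] WLPA G K := by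
  refine AlgEquiv.ofAlgHom (bwdHom K h) (fwdHom K h) ?_ ?_
  · refine wlpa_hom_ext K fun x => ?_
    simp only [AlgHom.coe_comp, Function.comp_apply, AlgHom.id_apply]
    rw [fwdHom_wmk, fwdFree_ι, bwdHom_wmk, bwdFree_ι, bwd_fwd_gen]
  · refine wlpa_hom_ext K fun x => ?_
    simp only [AlgHom.coe_comp, Function.comp_apply, AlgHom.id_apply]
    rw [bwdHom_wmk, bwdFree_ι, fwdHom_wmk, fwdFree_ι, fwd_bwd_gen]

end Assemble
/-- If `(E,w)` satisfies Condition (LPA), there is a row-finite weighted graph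
`(Ẽ,w̃)` in which ranges of weighted edges are sinks and no vertex emits or receives two
distinct weighted edges, with `L_K(Ẽ,w̃) ≅ L_K(E,w)`. -/
theorem stmt1 (K : Type) [Field K] (G : WGraph) (h : G.LPA) :
    ∃ G' : WGraph,
      (∀ e, G'.Weighted e → ∀ f, G'.s f ≠ G'.r e) ∧
      (∀ e f, G'.Weighted e → G'.Weighted f → G'.s e = G'.s f → e = f) ∧
      (∀ e f, G'.Weighted e → G'.Weighted f → G'.r e = G'.r f → e = f) ∧
      Nonempty (WLPA G' K ≃ₐ[K] WLPA G K) := by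
  refine ⟨G.rev h, WGraph.rev_cond1 h, WGraph.rev_cond2 h, WGraph.rev_cond3 h,
    ⟨revEquiv K h⟩⟩
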